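/- Let R be a ring, M an R-module, and e ∈ M. The direct limit of the modules Sym^{≤n}(M)/(1−e)Sym^{≤n−1}(M) under the natural maps (induced by multiplication by e) is isomorphic to Sym(M)/(1−e)Sym(M). -/

import Mathlib

open TensorProduct

variable (R M : Type*) [CommRing R] [AddCommGroup M] [Module R M]

/-- The commutativity relation on the tensor algebra. -/
inductive SymAlgRel : TensorAlgebra R M → TensorAlgebra R M → Prop
  | comm (m n : M) : SymAlgRel (TensorAlgebra.ι R m * TensorAlgebra.ι R n)
      (TensorAlgebra.ι R n * TensorAlgebra.ι R m)

/-- The symmetric algebra `Sym(M)`. -/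
abbrev SymmAlg := RingQuot (SymAlgRel R M)

instance : AddCommGroup (SymmAlg R M) :=
  { (inferInstance : AddCommMonoid (SymmAlg R M)),
    (Ring.toAddCommGroup : AddCommGroup (SymmAlg R M)) with }

/-- The canonical inclusion `M → Sym(M)`. -/
noncomputable def symι : M →ₗ[R] SymmAlg R M :=
  (RingQuot.mkAlgHom R (SymAlgRel R M)).toLinearMap ∘ₗ TensorAlgebra.ι R

/-- The degree-one part of `Sym(M)`. -/
noncomputable def symV : Submodule R (SymmAlg R M) :=
  Submodule.span R (Set.range (symι R M))

/-- The truncation `Sym^{≤ n}(M)`. -/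
noncomputable def symLE (n : ℕ) : Submodule R (SymmAlg R M) :=
  (1 ⊔ symV R M) ^ n

/-- The submodule `(1 - e)·Sym(M)`. -/
noncomputable def symW (e : M) : Submodule R (SymmAlg R M) :=
  Submodule.map (LinearMap.mulLeft R ((1 : SymmAlg R M) - symι R M e)) ⊤

/-- The quotient `Sym^{≤ n}(M) / (1 - e)·Sym^{≤ n-1}(M)`. -/
noncomputable abbrev symQuot (e : M) (n : ℕ) :=
  ↥(symLE R M n) ⧸
    (Submodule.comap (symLE R M n).subtype
      (Submodule.map (LinearMap.mulLeft R ((1 : SymmAlg R M) - symι R M e))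
        (symLE R M (n - 1))))

/-- The natural map `Sym^{≤ n}(M)/(1-e)Sym^{≤ n-1}(M) → Sym(M)/(1-e)Sym(M)`. -/
noncomputable def symπ (e : M) (n : ℕ) :
    symQuot R M e n →ₗ[R] (SymmAlg R M ⧸ symW R M e) :=
  Submodule.liftQ _ ((symW R M e).mkQ ∘ₗ (symLE R M n).subtype) (by
    intro x hx
    simp only [LinearMap.mem_ker, LinearMap.comp_apply, Submodule.mkQ_apply,
      Submodule.Quotient.mk_eq_zero]
    exact Submodule.map_mono le_top hx)

section Aux

open Polynomial Finset

theorem symι_eq (m : M) :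
    symι R M m = RingQuot.mkAlgHom R (SymAlgRel R M) (TensorAlgebra.ι R m) := rfl

/-- Induction principle for the symmetric algebra. -/
theorem symm_induction {P : SymmAlg R M → Prop}
    (halg : ∀ r, P (algebraMap R (SymmAlg R M) r))
    (hgen : ∀ m, P (symι R M m))
    (hmul : ∀ a b, P a → P b → P (a * b))
    (hadd : ∀ a b, P a → P b → P (a + b)) (z : SymmAlg R M) : P z := by
  obtain ⟨t, rfl⟩ := RingQuot.mkAlgHom_surjective R (SymAlgRel R M) z
  refine TensorAlgebra.induction (fun r => ?_) (fun m => hgen m)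
    (fun a b ha hb => ?_) (fun a b ha hb => ?_) t
  · rw [AlgHom.commutes]; exact halg r
  · rw [map_mul]; exact hmul _ _ ha hb
  · rw [map_add]; exact hadd _ _ ha hb

theorem symι_comm (m n : M) :
    symι R M m * symι R M n = symι R M n * symι R M m := by
  have h := RingQuot.mkAlgHom_rel R (SymAlgRel.comm (R := R) (M := M) m n)
  simp only [map_mul] at h
  simpa only [← symι_eq] using h

private theorem CX_mul_CX (a b : SymmAlg R M) :
    (C a * X) * (C b * X) = C (a * b) * (X * X) := by
  rw [mul_assoc (C a), ← mul_assoc X (C b), X_mul, mul_assoc (C b),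
    ← mul_assoc (C a), ← C_mul]

/-- The "grading" map `Sym(M) → Sym(M)[X]`, sending `m ↦ C m * X`. -/
noncomputable def Dmap : SymmAlg R M →ₐ[R] Polynomial (SymmAlg R M) :=
  RingQuot.liftAlgHom R ⟨TensorAlgebra.lift R
      ((LinearMap.mulRight R (X : Polynomial (SymmAlg R M))) ∘ₗ
        (CAlgHom (R := R)).toLinearMap ∘ₗ symι R M), by
    rintro _ _ ⟨m, n⟩
    simp only [map_mul, TensorAlgebra.lift_ι_apply, LinearMap.comp_apply,
      LinearMap.mulRight_apply, AlgHom.toLinearMap_apply, CAlgHom_apply]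
    rw [CX_mul_CX, CX_mul_CX, symι_comm]⟩

theorem Dmap_symι (m : M) : Dmap R M (symι R M m) = C (symι R M m) * X := by
  rw [symι_eq, Dmap, RingQuot.liftAlgHom_mkAlgHom_apply]
  simp only [TensorAlgebra.lift_ι_apply, LinearMap.comp_apply,
    LinearMap.mulRight_apply, AlgHom.toLinearMap_apply, CAlgHom_apply]
  rw [← symι_eq]

theorem evalOne_mul (p q : Polynomial (SymmAlg R M)) :
    (p * q).eval 1 = p.eval 1 * q.eval 1 :=
  eval₂_mul_noncomm _ _ fun _ => Commute.one_right _

theorem evalOne_Dmap (z : SymmAlg R M) : (Dmap R M z).eval 1 = z := by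
  refine symm_induction R M (P := fun z => (Dmap R M z).eval 1 = z)
    (fun r => ?_) (fun m => ?_) (fun a b ha hb => ?_) (fun a b ha hb => ?_) z
  · rw [AlgHom.commutes, Polynomial.algebraMap_apply, eval_C]
  · rw [Dmap_symι, eval_mul_X, eval_C, mul_one]
  · rw [map_mul, evalOne_mul, ha, hb]
  · rw [map_add, eval_add, ha, hb]

theorem coeff_Dmap_mem (z : SymmAlg R M) : ∀ k, (Dmap R M z).coeff k ∈ symV R M ^ k := by
  refine symm_induction R M (P := fun z => ∀ k, (Dmap R M z).coeff k ∈ symV R M ^ k)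
    (fun r k => ?_) (fun m k => ?_) (fun a b ha hb k => ?_)
    (fun a b ha hb k => ?_) z
  · rw [AlgHom.commutes, Polynomial.algebraMap_apply, coeff_C]
    split
    · next h =>
      subst h
      rw [pow_zero]
      exact Submodule.algebraMap_mem r
    · exact Submodule.zero_mem _
  · rw [Dmap_symι, coeff_C_mul_X]
    split
    · next h =>
      subst h
      rw [pow_one]
      exact Submodule.subset_span ⟨m, rfl⟩
    · exact Submodule.zero_mem _
  · rw [map_mul, coeff_mul]
    refine Submodule.sum_mem _ ?_
    rintro ⟨i, j⟩ hij
    rw [Finset.HasAntidiagonal.mem_antidiagonal] at hij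
    rw [← hij, pow_add]
    exact Submodule.mul_mem_mul (ha i) (hb j)
  · rw [map_add, coeff_add]
    exact Submodule.add_mem _ (ha k) (hb k)

/-- Polynomials of degree at most `n`, as a submodule. -/
noncomputable def degLE (n : ℕ) : Submodule R (Polynomial (SymmAlg R M)) where
  carrier := {p | ∀ k, n < k → p.coeff k = 0}
  add_mem' := by
    intro p q hp hq k hk
    rw [coeff_add, hp k hk, hq k hk, add_zero]
  zero_mem' := by intro k hk; simp
  smul_mem' := by
    intro c p hp k hk
    rw [coeff_smul, hp k hk, smul_zero]

theorem mem_degLE {n : ℕ} {p : Polynomial (SymmAlg R M)} :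
    p ∈ degLE R M n ↔ ∀ k, n < k → p.coeff k = 0 := Iff.rfl

theorem one_mem_degLE (n : ℕ) : (1 : Polynomial (SymmAlg R M)) ∈ degLE R M n := by
  intro k hk
  rw [coeff_one, if_neg (by omega)]

theorem degLE_mul_le (a b : ℕ) : degLE R M a * degLE R M b ≤ degLE R M (a + b) := by
  refine Submodule.mul_le.mpr fun p hp q hq => ?_
  intro k hk
  rw [coeff_mul]
  refine Finset.sum_eq_zero ?_
  rintro ⟨i, j⟩ hij
  rw [Finset.HasAntidiagonal.mem_antidiagonal] at hij
  rcases lt_or_ge a i with h | h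
  · rw [hp i h, zero_mul]
  · rw [hq j (by omega), mul_zero]

theorem Dmap_mem_degLE {n : ℕ} {z : SymmAlg R M} (hz : z ∈ symLE R M n) :
    Dmap R M z ∈ degLE R M n := by
  have h2 : Submodule.map (Dmap R M).toLinearMap (1 ⊔ symV R M) ≤ degLE R M 1 := by
    rw [Submodule.map_sup]
    refine sup_le ?_ ?_
    · rw [Submodule.map_one]
      exact Submodule.one_le.mpr (one_mem_degLE R M 1)
    · rw [symV, Submodule.map_span]
      refine Submodule.span_le.mpr ?_
      rintro _ ⟨_, ⟨m, rfl⟩, rfl⟩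
      intro k hk
      simp only [AlgHom.toLinearMap_apply]
      rw [Dmap_symι, coeff_C_mul_X, if_neg (by omega)]
  have h3 : ∀ t, (Submodule.map (Dmap R M).toLinearMap (1 ⊔ symV R M)) ^ t ≤ degLE R M t := by
    intro t
    induction t with
    | zero =>
      rw [pow_zero]
      exact Submodule.one_le.mpr (one_mem_degLE R M 0)
    | succ t ih =>
      rw [pow_succ]
      exact le_trans (mul_le_mul' ih h2) (degLE_mul_le R M t 1)
  have h1 : Submodule.map (Dmap R M).toLinearMap (symLE R M n) ≤ degLE R M n := by
    rw [symLE, Submodule.map_pow]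
    exact h3 n
  exact h1 ⟨z, hz, rfl⟩

theorem mem_symLE_pow_ι (e : M) (t : ℕ) : symι R M e ^ t ∈ symLE R M t := by
  rw [symLE]
  have hmem : symι R M e ∈ 1 ⊔ symV R M :=
    Submodule.mem_sup_right (Submodule.subset_span ⟨e, rfl⟩)
  exact Submodule.pow_mem_pow _ hmem t

theorem symLE_mul {a b : ℕ} {x y : SymmAlg R M}
    (hx : x ∈ symLE R M a) (hy : y ∈ symLE R M b) : x * y ∈ symLE R M (a + b) := by
  rw [symLE, pow_add]
  exact Submodule.mul_mem_mul hx hy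

theorem one_le_symLE (n : ℕ) : (1 : Submodule R (SymmAlg R M)) ≤ symLE R M n := by
  induction n with
  | zero => rw [symLE, pow_zero]
  | succ n ih =>
    rw [symLE, pow_succ]
    calc (1 : Submodule R (SymmAlg R M)) = 1 * 1 := (one_mul 1).symm
      _ ≤ (1 ⊔ symV R M) ^ n * (1 ⊔ symV R M) := mul_le_mul' ih le_sup_left

theorem symLE_mono {i j : ℕ} (h : i ≤ j) : symLE R M i ≤ symLE R M j := by
  obtain ⟨t, rfl⟩ := Nat.exists_eq_add_of_le h
  rw [symLE, symLE, pow_add]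
  calc (1 ⊔ symV R M) ^ i = (1 ⊔ symV R M) ^ i * 1 := (mul_one _).symm
    _ ≤ (1 ⊔ symV R M) ^ i * (1 ⊔ symV R M) ^ t :=
      mul_le_mul' le_rfl (one_le_symLE R M t)

theorem symV_pow_le (k : ℕ) : symV R M ^ k ≤ symLE R M k := by
  induction k with
  | zero => rw [symLE, pow_zero, pow_zero]
  | succ k ih =>
    rw [symLE, pow_succ, pow_succ]
    exact mul_le_mul' ih le_sup_right

theorem exists_symLE (z : SymmAlg R M) : ∃ n, z ∈ symLE R M n := by
  refine symm_induction R M (P := fun z => ∃ n, z ∈ symLE R M n) (fun r => ?_) (fun m => ?_) (fun a b ha hb => ?_)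
    (fun a b ha hb => ?_) z
  · exact ⟨0, by rw [symLE, pow_zero]; exact Submodule.algebraMap_mem r⟩
  · exact ⟨1, by rw [symLE, pow_one]; exact Submodule.mem_sup_right (Submodule.subset_span ⟨m, rfl⟩)⟩
  · obtain ⟨n1, h1⟩ := ha
    obtain ⟨n2, h2⟩ := hb
    exact ⟨n1 + n2, symLE_mul R M h1 h2⟩
  · obtain ⟨n1, h1⟩ := ha
    obtain ⟨n2, h2⟩ := hb
    exact ⟨max n1 n2, Submodule.add_mem _ (symLE_mono R M (le_max_left _ _) h1)
      (symLE_mono R M (le_max_right _ _) h2)⟩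

theorem one_sub_mul_geom (ε : SymmAlg R M) (t : ℕ) :
    (1 - ε) * ∑ j ∈ Finset.range t, ε ^ j = 1 - ε ^ t := by
  induction t with
  | zero => simp
  | succ t ih =>
    have h : (1 - ε) * ε ^ t = ε ^ t - ε ^ (t + 1) := by
      rw [sub_mul, one_mul, ← pow_succ']
    rw [Finset.sum_range_succ, mul_add, ih, h]
    abel

theorem coeff_one_sub_CX_mul {A : Type*} [Ring A] (a : A) (p : Polynomial A) (d : ℕ) :
    ((1 - Polynomial.C a * Polynomial.X) * p).coeff (d + 1) = p.coeff (d + 1) - a * p.coeff d := by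
  rw [one_sub_mul, Polynomial.coeff_sub, mul_assoc, Polynomial.coeff_C_mul,
    Polynomial.coeff_X_mul]

theorem coeff_Dmap_one_sub_mul (e : M) (y : SymmAlg R M) (d : ℕ) :
    (Dmap R M ((1 - symι R M e) * y)).coeff (d + 1) =
      (Dmap R M y).coeff (d + 1) - symι R M e * (Dmap R M y).coeff d := by
  rw [map_mul, map_sub, map_one, Dmap_symι]
  exact coeff_one_sub_CX_mul (symι R M e) (Dmap R M y) d

/-- The key algebraic lemma: if `x ∈ Sym^{≤n}(M)` lies in `(1-e)·Sym(M)`, then some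
multiple `e^K x` lies in `(1-e)·Sym^{≤ n+K-1}(M)`. -/
theorem key (e : M) {n : ℕ} {x : SymmAlg R M} (hx : x ∈ symLE R M n) (hxW : x ∈ symW R M e) :
    ∃ K, 1 ≤ K ∧ symι R M e ^ K * x ∈
      Submodule.map (LinearMap.mulLeft R (1 - symι R M e)) (symLE R M (n + K - 1)) := by
  obtain ⟨y, -, rfl⟩ := hxW
  simp only [LinearMap.mulLeft_apply] at hx ⊢
  set ε := symι R M e with hε
  set c : ℕ → SymmAlg R M := fun k => (Dmap R M y).coeff k with hc
  set m := (Dmap R M y).natDegree with hm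
  set K := m + 1 with hK
  have hstep : ∀ d, n ≤ d → c (d + 1) = ε * c d := by
    intro d hd
    have h0 : (Dmap R M ((1 - ε) * y)).coeff (d + 1) = 0 :=
      Dmap_mem_degLE R M hx (d + 1) (by omega)
    have h1 := coeff_Dmap_one_sub_mul R M e y d
    rw [h0] at h1
    have := sub_eq_zero.mp h1.symm
    exact this
  have claim1 : ∀ t, c (n + t) = ε ^ t * c n := by
    intro t
    induction t with
    | zero => simp
    | succ t ih =>
      have : n + (t + 1) = (n + t) + 1 := by omega
      rw [this, hstep (n + t) (by omega), ih, ← mul_assoc, ← pow_succ']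
  have claim2 : ε ^ K * c n = 0 := by
    have h0 : c (n + K) = 0 := by
      apply Polynomial.coeff_eq_zero_of_natDegree_lt
      omega
    rw [← claim1 K, h0]
  have hy : y = ∑ k ∈ range (n + K), c k := by
    conv_lhs => rw [← evalOne_Dmap R M y]
    rw [Polynomial.eval_eq_sum_range' (n := n + K) (by omega) 1]
    simp [hc]
  set z₀ := ∑ k ∈ range n, c k with hz₀def
  have hz₀ : ε ^ K * z₀ ∈ symLE R M (n + K - 1) := by
    rw [hz₀def, Finset.mul_sum]
    refine Submodule.sum_mem _ fun k hk => ?_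
    rw [Finset.mem_range] at hk
    have h1 : ε ^ K * c k ∈ symLE R M (K + k) :=
      symLE_mul R M (mem_symLE_pow_ι R M e K) (symV_pow_le R M k (coeff_Dmap_mem R M y k))
    exact symLE_mono R M (by omega) h1
  have hsplit : (1 - ε) * y = (1 - ε) * z₀ + c n := by
    rw [hy, Finset.sum_range_add, ← hz₀def, mul_add]
    congr 1
    have hsum : ∑ j ∈ range K, c (n + j) = (∑ j ∈ range K, ε ^ j) * c n := by
      rw [Finset.sum_mul]
      exact Finset.sum_congr rfl fun j _ => claim1 j
    rw [hsum, ← mul_assoc, one_sub_mul_geom, sub_mul, one_mul, claim2, sub_zero]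
  refine ⟨K, by omega, ⟨ε ^ K * z₀, hz₀, ?_⟩⟩
  simp only [LinearMap.mulLeft_apply]
  have hcomm : ε ^ K * (1 - ε) = (1 - ε) * ε ^ K :=
    (((Commute.one_left ε).sub_left (Commute.refl ε)).pow_right K).eq.symm
  conv_rhs => rw [hsplit, mul_add, claim2, add_zero, ← mul_assoc, hcomm, mul_assoc]

theorem mem_symLE_of_mul_pow (e : M) {i j : ℕ} (h : i ≤ j) {x : SymmAlg R M}
    (hx : x ∈ symLE R M i) : symι R M e ^ (j - i) * x ∈ symLE R M j := by
  have h1 := symLE_mul R M (mem_symLE_pow_ι R M e (j - i)) hx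
  rwa [Nat.sub_add_cancel h] at h1

end Aux

/-- the direct limit of the modules `Sym^{≤n}(M)/(1-e)Sym^{≤n-1}(M)`,
under the natural maps induced by multiplication by `e`, is isomorphic to
`Sym(M)/(1-e)Sym(M)`, compatibly with the natural maps to the latter. -/
theorem stmt6 (e : M)
    (f : ∀ i j : ℕ, i ≤ j → symQuot R M e i →ₗ[R] symQuot R M e j)
    (hf : ∀ (i j : ℕ) (h : i ≤ j) (x : SymmAlg R M) (hx : x ∈ symLE R M i)
      (hx' : symι R M e ^ (j - i) * x ∈ symLE R M j),
      f i j h (Submodule.Quotient.mk ⟨x, hx⟩) =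
        Submodule.Quotient.mk ⟨symι R M e ^ (j - i) * x, hx'⟩) :
    ∃ L : Module.DirectLimit (symQuot R M e) f ≃ₗ[R] (SymmAlg R M ⧸ symW R M e),
      ∀ (i : ℕ) (x : symQuot R M e i),
        L (Module.DirectLimit.of R ℕ (symQuot R M e) f i x) = symπ R M e i x := by
  classical
  have compat : ∀ (i j : ℕ) (hij : i ≤ j) (x : symQuot R M e i),
      symπ R M e j (f i j hij x) = symπ R M e i x := by
    intro i j hij x
    obtain ⟨⟨a, ha⟩, rfl⟩ := Submodule.Quotient.mk_surjective _ x
    rw [hf i j hij a ha (mem_symLE_of_mul_pow R M e hij ha)]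
    simp only [symπ, Submodule.liftQ_apply, LinearMap.comp_apply,
      Submodule.subtype_apply, Submodule.mkQ_apply]
    set ε := symι R M e
    set t := j - i
    refine Eq.symm ?_
    rw [Submodule.Quotient.eq]
    have h5 : (LinearMap.mulLeft R ((1 : SymmAlg R M) - symι R M e))
        ((∑ k ∈ Finset.range t, ε ^ k) * a) = a - ε ^ t * a := by
      simp only [LinearMap.mulLeft_apply]
      rw [← mul_assoc, one_sub_mul_geom, sub_mul, one_mul]
    exact ⟨_, trivial, h5⟩
  set L0 := Module.DirectLimit.lift R ℕ (symQuot R M e) f (symπ R M e) compat with hL0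
  have hsurj : Function.Surjective L0 := by
    intro w
    obtain ⟨z, rfl⟩ := Submodule.mkQ_surjective (symW R M e) w
    obtain ⟨n, hz⟩ := exists_symLE R M z
    refine ⟨Module.DirectLimit.of R ℕ (symQuot R M e) f n (Submodule.Quotient.mk ⟨z, hz⟩), ?_⟩
    rw [hL0, Module.DirectLimit.lift_of]
    simp only [symπ, Submodule.liftQ_apply, LinearMap.comp_apply,
      Submodule.subtype_apply, Submodule.mkQ_apply]
  have hinj : Function.Injective L0 := by
    letI : AddCommGroup (Module.DirectLimit (symQuot R M e) f) := @Module.DirectLimit.addCommGroup R _ ℕ _ _ (symQuot R M e) (fun i => inferInstance) (fun i => inferInstance) f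
    rw [injective_iff_map_eq_zero]
    intro q hq
    obtain ⟨i, x, rfl⟩ := Module.DirectLimit.exists_of q
    obtain ⟨⟨a, ha⟩, rfl⟩ := Submodule.Quotient.mk_surjective _ x
    rw [hL0, Module.DirectLimit.lift_of] at hq
    simp only [symπ, Submodule.liftQ_apply, LinearMap.comp_apply,
      Submodule.subtype_apply, Submodule.mkQ_apply, Submodule.Quotient.mk_eq_zero] at hq
    obtain ⟨K, hK1, hKmem⟩ := key R M e ha hq
    have hij : i ≤ i + K := Nat.le_add_right i K
    have hmem : symι R M e ^ (i + K - i) * a ∈ symLE R M (i + K) :=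
      mem_symLE_of_mul_pow R M e hij ha
    have hzero : (Submodule.Quotient.mk ⟨symι R M e ^ (i + K - i) * a, hmem⟩ :
        symQuot R M e (i + K)) = 0 := by
      rw [Submodule.Quotient.mk_eq_zero]
      simp only [Submodule.mem_comap, Submodule.subtype_apply]
      have hKi : i + K - i = K := by omega
      rw [hKi]
      have hexp : i + K - 1 = i + K - 1 := rfl
      exact hKmem
    have h1 := Module.DirectLimit.of_f (R := R) (ι := ℕ) (G := symQuot R M e) (f := f)
      (hij := hij) (x := (Submodule.Quotient.mk ⟨a, ha⟩ : symQuot R M e i))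
    calc Module.DirectLimit.of R ℕ (symQuot R M e) f i (Submodule.Quotient.mk ⟨a, ha⟩)
        = Module.DirectLimit.of R ℕ (symQuot R M e) f (i + K)
            ((f i (i + K) hij) (Submodule.Quotient.mk ⟨a, ha⟩)) := h1.symm
      _ = Module.DirectLimit.of R ℕ (symQuot R M e) f (i + K)
            (Submodule.Quotient.mk ⟨symι R M e ^ (i + K - i) * a, hmem⟩) := by
          rw [hf i (i + K) hij a ha hmem]
      _ = 0 := by rw [hzero, map_zero]
  refine ⟨LinearEquiv.ofBijective L0 ⟨hinj, hsurj⟩, fun i x => ?_⟩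
  simp only [LinearEquiv.ofBijective_apply, hL0, Module.DirectLimit.lift_of]
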